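/- Let α and β be finite nonempty index types and let ρ : Matrix (α × β) (α × β) ℂ be a density matrix that is entangled, i.e. ρ does not lie in the separable cone. Then there exists a Hermitian matrix W : Matrix (α × β) (α × β) ℂ (an entanglement witness for ρ) such that re(trace(W * ρ)) < 0 while re(trace(W * σ)) ≥ 0 for every σ in the separable cone. -/

import Mathlib

open Matrix BigOperators ComplexOrder Kronecker

/-- The separable cone: sums of Kronecker products of PSD matrices. -/
def SepCone (α β : Type*) [Fintype α] [Fintype β] : Set (Matrix (α × β) (α × β) ℂ) :=
  { σ | ∃ (ι : Type) (_ : Fintype ι) (P : ι → Matrix α α ℂ) (Q : ι → Matrix β β ℂ),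
      (∀ i, (P i).PosSemidef) ∧ (∀ i, (Q i).PosSemidef) ∧ σ = ∑ i, P i ⊗ₖ Q i }

set_option linter.unusedSectionVars false
set_option linter.unusedTactic false
set_option maxHeartbeats 1000000

open scoped MatrixOrder Matrix.Norms.L2Operator in
lemma Matrix.posSemidef_iff_eq_transpose_mul_self {n : Type*} [Fintype n]
    {A : Matrix n n ℂ} : A.PosSemidef ↔ ∃ B : Matrix n n ℂ, A = Bᴴ * B := by
  classical
  constructor
  · intro hA
    obtain ⟨B, hB⟩ := CStarAlgebra.nonneg_iff_eq_star_mul_self.mp hA.nonneg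
    exact ⟨B, hB⟩
  · rintro ⟨B, rfl⟩
    exact Matrix.posSemidef_conjTranspose_mul_self B

section PSDLemmas

variable {γ : Type*} [Fintype γ]

lemma auxPsdSmul {P : Matrix γ γ ℂ} (hP : P.PosSemidef) {r : ℝ} (hr : 0 ≤ r) :
    (((r : ℂ)) • P).PosSemidef := by
  obtain ⟨B, rfl⟩ := Matrix.posSemidef_iff_eq_transpose_mul_self.mp hP
  refine Matrix.posSemidef_iff_eq_transpose_mul_self.mpr ⟨((Real.sqrt r : ℂ)) • B, ?_⟩
  rw [Matrix.conjTranspose_smul, Matrix.smul_mul, Matrix.mul_smul, smul_smul]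
  congr 1
  rw [Complex.star_def, Complex.conj_ofReal, ← Complex.ofReal_mul, Real.mul_self_sqrt hr]

lemma auxDiag {P : Matrix γ γ ℂ} (hP : P.PosSemidef) (i : γ) :
    P i i = ((P i i).re : ℂ) ∧ 0 ≤ (P i i).re := by
  obtain ⟨B, rfl⟩ := Matrix.posSemidef_iff_eq_transpose_mul_self.mp hP
  have h : (Bᴴ * B) i i = ((∑ k, Complex.normSq (B k i) : ℝ) : ℂ) := by
    simp [Matrix.mul_apply, Matrix.conjTranspose_apply, Complex.normSq_eq_conj_mul_self]
  rw [h]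
  constructor
  · norm_num
  · simp only [Complex.ofReal_re]
    exact Finset.sum_nonneg fun k _ => Complex.normSq_nonneg _

lemma auxTraceRe {P : Matrix γ γ ℂ} (hP : P.PosSemidef) :
    0 ≤ P.trace.re ∧ P.trace = ((P.trace.re : ℝ) : ℂ) := by
  have h : P.trace = ∑ i, P i i := rfl
  have h2 : P.trace.re = ∑ i, (P i i).re := by rw [h, Complex.re_sum]
  constructor
  · rw [h2]; exact Finset.sum_nonneg fun i _ => (auxDiag hP i).2
  · rw [h2, h]; push_cast
    exact Finset.sum_congr rfl fun i _ => (auxDiag hP i).1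

lemma auxEntry {P : Matrix γ γ ℂ} (hP : P.PosSemidef) (htr : P.trace = 1) (i j : γ) :
    ‖P i j‖ ≤ 1 := by
  have hdre : ∀ k, (P k k).re ≤ 1 := by
    intro k
    have h2 : P.trace.re = ∑ l, (P l l).re := by
      rw [show P.trace = ∑ l, P l l from rfl, Complex.re_sum]
    have h3 : ∑ l, (P l l).re = 1 := by rw [← h2, htr]; simp
    calc (P k k).re ≤ ∑ l, (P l l).re :=
          Finset.single_le_sum (fun l _ => (auxDiag hP l).2) (Finset.mem_univ k)
      _ = 1 := h3
  obtain ⟨B, rfl⟩ := Matrix.posSemidef_iff_eq_transpose_mul_self.mp hP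
  set x : EuclideanSpace ℂ γ := WithLp.toLp 2 (fun k => B k i) with hx
  set y : EuclideanSpace ℂ γ := WithLp.toLp 2 (fun k => B k j) with hy
  have hinner : (Bᴴ * B) i j = inner ℂ x y := by
    simp [Matrix.mul_apply, Matrix.conjTranspose_apply, PiLp.inner_apply, RCLike.inner_apply, hx, hy, mul_comm]
  have hxx : (‖x‖ : ℝ)^2 = ((Bᴴ * B) i i).re := by
    have := @inner_self_eq_norm_sq ℂ _ _ _ _ x
    rw [show (Bᴴ * B) i i = inner ℂ x x by
      simp [Matrix.mul_apply, Matrix.conjTranspose_apply, PiLp.inner_apply, RCLike.inner_apply, hx, mul_comm, -inner_self_eq_norm_sq_to_K]]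
    rw [← this]; rfl
  have hyy : (‖y‖ : ℝ)^2 = ((Bᴴ * B) j j).re := by
    rw [show (Bᴴ * B) j j = inner ℂ y y by
      simp [Matrix.mul_apply, Matrix.conjTranspose_apply, PiLp.inner_apply, RCLike.inner_apply, hy, mul_comm, -inner_self_eq_norm_sq_to_K]]
    rw [← @inner_self_eq_norm_sq ℂ _ _ _ _ y]; rfl
  have hxle : ‖x‖ ≤ 1 := by nlinarith [norm_nonneg x, hdre i, hxx]
  have hyle : ‖y‖ ≤ 1 := by nlinarith [norm_nonneg y, hdre j, hyy]
  calc ‖(Bᴴ * B) i j‖ = ‖(inner ℂ x y : ℂ)‖ := by rw [hinner]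
    _ ≤ ‖x‖ * ‖y‖ := norm_inner_le_norm x y
    _ ≤ 1 := by nlinarith [norm_nonneg x, norm_nonneg y]

noncomputable def qfLM (x : γ → ℂ) : Matrix γ γ ℂ →ₗ[ℂ] ℂ where
  toFun P := dotProduct (star x) (P *ᵥ x)
  map_add' P Q := by simp [Matrix.add_mulVec, dotProduct_add]
  map_smul' c P := by simp [Matrix.smul_mulVec, dotProduct_smul]

lemma auxClosedPSD : IsClosed {P : Matrix γ γ ℂ | P.PosSemidef} := by
  have h1 : IsClosed {P : Matrix γ γ ℂ | P.IsHermitian} :=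
    isClosed_eq (continuous_id.matrix_conjTranspose) continuous_id
  have h2 : ∀ x : γ → ℂ, IsClosed {P : Matrix γ γ ℂ | 0 ≤ dotProduct (star x) (P *ᵥ x)} := by
    intro x
    have hc : Continuous fun P : Matrix γ γ ℂ => dotProduct (star x) (P *ᵥ x) :=
      (qfLM x).continuous_of_finiteDimensional
    have : {P : Matrix γ γ ℂ | 0 ≤ dotProduct (star x) (P *ᵥ x)}
        = {P | 0 ≤ (dotProduct (star x) (P *ᵥ x)).re ∧
               0 = (dotProduct (star x) (P *ᵥ x)).im} := by
      ext P; exact Complex.nonneg_iff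
    rw [this]
    exact (isClosed_le continuous_const (Complex.continuous_re.comp hc)).inter
      (isClosed_eq continuous_const (Complex.continuous_im.comp hc))
  have : {P : Matrix γ γ ℂ | P.PosSemidef}
      = {P : Matrix γ γ ℂ | P.IsHermitian} ∩ ⋂ x, {P | 0 ≤ dotProduct (star x) (P *ᵥ x)} := by
    ext P
    simp only [Set.mem_setOf_eq, Set.mem_inter_iff, Set.mem_iInter]
    exact Matrix.posSemidef_iff_dotProduct_mulVec
  rw [this]
  exact h1.inter (isClosed_iInter h2)

lemma auxSCompact : IsCompact {P : Matrix γ γ ℂ | P.PosSemidef ∧ P.trace = 1} := by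
  have hball : IsCompact {P : Matrix γ γ ℂ | ∀ i j, P i j ∈ Metric.closedBall (0:ℂ) 1} := by
    have h : IsCompact (Set.univ.pi fun _ : γ => Set.univ.pi fun _ : γ => Metric.closedBall (0:ℂ) 1) :=
      isCompact_univ_pi fun _ => isCompact_univ_pi fun _ => isCompact_closedBall 0 1
    rw [show {P : Matrix γ γ ℂ | ∀ i j, P i j ∈ Metric.closedBall (0:ℂ) 1}
        = (Set.univ.pi fun _ : γ => Set.univ.pi fun _ : γ => Metric.closedBall (0:ℂ) 1 :
          Set (γ → γ → ℂ)) from ?_]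
    · exact h
    ext P
    constructor
    · intro hP
      intro i _
      intro j _
      exact hP i j
    · intro hP i j
      exact hP i (Set.mem_univ i) j (Set.mem_univ j)
  apply hball.of_isClosed_subset
  · have hc : Continuous fun P : Matrix γ γ ℂ => P.trace :=
      ((Matrix.traceLinearMap γ ℂ ℂ)).continuous_of_finiteDimensional
    exact auxClosedPSD.inter (isClosed_eq hc continuous_const)
  · rintro P ⟨hP, htr⟩ i j
    simpa [Complex.dist_eq] using auxEntry hP htr i j

end PSDLemmas

section ReprLemmas

variable {n : Type*} [Fintype n] [DecidableEq n]

lemma auxDecompose (z : ℂ) (A : Matrix n n ℂ) :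
    z • A = (z.re : ℝ) • A + (z.im : ℝ) • (Complex.I • A) := by
  ext i j
  show z * A i j = z.re • (A i j) + z.im • (Complex.I * A i j)
  simp only [Complex.real_smul]
  rw [← Complex.re_add_im z]
  push_cast
  ring_nf
  simp [Complex.I_sq]
  ring

lemma auxRepr (f : Matrix n n ℂ →L[ℝ] ℝ) :
    ∃ B : Matrix n n ℂ, ∀ σ : Matrix n n ℂ, ((B * σ).trace).re = f σ := by
  classical
  refine ⟨Matrix.of fun i j => ((f (Matrix.single j i 1) : ℝ) : ℂ)
      - Complex.I * ((f (Complex.I • Matrix.single j i 1) : ℝ) : ℂ), fun σ => ?_⟩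
  have htr : ((Matrix.of fun i j => ((f (Matrix.single j i 1) : ℝ) : ℂ)
      - Complex.I * ((f (Complex.I • Matrix.single j i 1) : ℝ) : ℂ)) * σ).trace
      = ∑ i, ∑ j, (((f (Matrix.single j i 1) : ℝ) : ℂ)
      - Complex.I * ((f (Complex.I • Matrix.single j i 1) : ℝ) : ℂ)) * σ j i := by
    simp [Matrix.trace, Matrix.diag, Matrix.mul_apply]
  rw [htr, Complex.re_sum]
  have hterm : ∀ i j, ((((f (Matrix.single j i 1) : ℝ) : ℂ)
      - Complex.I * ((f (Complex.I • Matrix.single j i 1) : ℝ) : ℂ)) * σ j i).re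
      = f ((σ j i) • Matrix.single j i 1) := by
    intro i j
    rw [auxDecompose (σ j i) (Matrix.single j i 1), f.map_add,
      f.map_smul ((σ j i).re : ℝ), f.map_smul ((σ j i).im : ℝ)]
    simp only [smul_eq_mul]
    simp [Complex.mul_re, Complex.sub_re, Complex.sub_im, Complex.mul_im]
    ring
  calc ∑ i, (∑ j, ((((f (Matrix.single j i 1) : ℝ) : ℂ)
        - Complex.I * ((f (Complex.I • Matrix.single j i 1) : ℝ) : ℂ)) * σ j i)).re
      = ∑ i, ∑ j, f ((σ j i) • Matrix.single j i 1) := by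
        refine Finset.sum_congr rfl fun i _ => ?_
        rw [Complex.re_sum]
        exact Finset.sum_congr rfl fun j _ => hterm i j
    _ = f σ := by
        rw [← Finset.sum_comm]
        rw [show ∑ a : n, ∑ b : n, f (σ a b • Matrix.single a b 1)
            = f (∑ a : n, ∑ b : n, σ a b • Matrix.single a b 1) by
          rw [map_sum f]
          exact Finset.sum_congr rfl fun a _ => (map_sum f _ _).symm]
        congr 1
        conv_rhs => rw [Matrix.matrix_eq_sum_single σ]
        refine Finset.sum_congr rfl fun a _ => Finset.sum_congr rfl fun b _ => ?_
        rw [Matrix.smul_single]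
        congr 1
        simp

lemma auxRealSmul (r : ℝ) (A : Matrix n n ℂ) : r • A = ((r : ℂ)) • A := by
  ext i j; exact Complex.real_smul.trans rfl

lemma auxTraceZero {P : Matrix n n ℂ} (hP : P.PosSemidef) (h : P.trace.re = 0) : P = 0 := by
  obtain ⟨B, rfl⟩ := Matrix.posSemidef_iff_eq_transpose_mul_self.mp hP
  have hdiag : ∀ i, (Bᴴ * B) i i = ((∑ k, Complex.normSq (B k i) : ℝ) : ℂ) := by
    intro i
    simp [Matrix.mul_apply, Matrix.conjTranspose_apply, Complex.normSq_eq_conj_mul_self]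
  have htr : (Bᴴ * B).trace.re = ∑ i, ∑ k, Complex.normSq (B k i) := by
    rw [show (Bᴴ * B).trace = ∑ i, (Bᴴ * B) i i from rfl]
    rw [Complex.re_sum]
    exact Finset.sum_congr rfl fun i _ => by rw [hdiag i, Complex.ofReal_re]
  rw [htr] at h
  have hB : B = 0 := by
    ext k i
    have h1 : ∀ i ∈ Finset.univ, (0:ℝ) ≤ ∑ k, Complex.normSq (B k i) :=
      fun i _ => Finset.sum_nonneg fun k _ => Complex.normSq_nonneg _
    have h2 := (Finset.sum_eq_zero_iff_of_nonneg h1).mp h i (Finset.mem_univ i)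
    have h3 : ∀ k ∈ Finset.univ, (0:ℝ) ≤ Complex.normSq (B k i) :=
      fun k _ => Complex.normSq_nonneg _
    have h4 := (Finset.sum_eq_zero_iff_of_nonneg h3).mp h2 k (Finset.mem_univ k)
    simpa using Complex.normSq_eq_zero.mp h4
  rw [hB]; simp

lemma auxRepr2 (f : Matrix n n ℂ →L[ℝ] ℝ) :
    ∃ W : Matrix n n ℂ, W.IsHermitian ∧
      ∀ σ : Matrix n n ℂ, σ.IsHermitian → ((W * σ).trace).re = f σ := by
  obtain ⟨B, hB⟩ := auxRepr f
  refine ⟨(2⁻¹ : ℝ) • (B + Bᴴ), ?_, ?_⟩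
  · show _ = _
    rw [Matrix.conjTranspose_smul, Matrix.conjTranspose_add, Matrix.conjTranspose_conjTranspose]
    rw [star_trivial, add_comm]
  · intro σ hσ
    have h1 : ((2⁻¹ : ℝ) • (B + Bᴴ)) * σ = (2⁻¹ : ℝ) • (B * σ + Bᴴ * σ) := by
      rw [Matrix.smul_mul, Matrix.add_mul]
    have h2 : (Bᴴ * σ).trace = star ((B * σ).trace) := by
      have : Bᴴ * σ = (σᴴ * B)ᴴ := by
        rw [Matrix.conjTranspose_mul, Matrix.conjTranspose_conjTranspose]
      rw [this, Matrix.trace_conjTranspose, hσ.eq, Matrix.trace_mul_comm]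
    rw [h1, Matrix.trace_smul, Matrix.trace_add, h2]
    have h3 : ((2⁻¹ : ℝ) • ((B * σ).trace + star ((B * σ).trace))).re
        = ((B * σ).trace).re := by
      simp [Complex.smul_re, Complex.add_re]
      ring
    rw [h3, hB σ]

end ReprLemmas

lemma auxHull {E : Type*} [AddCommGroup E] [Module ℝ E] [FiniteDimensional ℝ E]
    {K : Set E} (hK : K.Nonempty) :
    convexHull ℝ K ⊆
      (fun wz : (Fin (Module.finrank ℝ E + 1) → ℝ) × (Fin (Module.finrank ℝ E + 1) → E) =>
          ∑ i, wz.1 i • wz.2 i) ''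
        ((stdSimplex ℝ (Fin (Module.finrank ℝ E + 1))) ×ˢ (Set.univ.pi fun _ => K)) := by
  classical
  intro x hx
  obtain ⟨ι, hι, z, w, hzK, hAI, hwpos, hwsum, hsum⟩ := eq_pos_convex_span_of_mem_convexHull hx
  have hcard : Fintype.card ι ≤ Module.finrank ℝ E + 1 := by
    refine le_trans hAI.card_le_finrank_succ ?_
    have := Submodule.finrank_le (vectorSpan ℝ (Set.range z))
    omega
  obtain ⟨e⟩ : Nonempty (ι ↪ Fin (Module.finrank ℝ E + 1)) :=
    Function.Embedding.nonempty_of_card_le (by simpa using hcard)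
  obtain ⟨k₀, hk₀⟩ := hK
  set d := Module.finrank ℝ E + 1
  set w' : Fin d → ℝ := fun j => ∑ i ∈ Finset.univ.filter (fun i => e i = j), w i with hw'
  set z' : Fin d → E := fun j => if h : ∃ i, e i = j then z h.choose else k₀ with hz'
  have hfib : ∀ i : ι, Finset.univ.filter (fun i' => e i' = e i) = {i} := by
    intro i; ext i'; simp [e.injective.eq_iff]
  have hz'e : ∀ i : ι, z' (e i) = z i := by
    intro i
    have h : ∃ i', e i' = e i := ⟨i, rfl⟩
    simp only [hz']; rw [dif_pos h]
    congr 1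
    exact e.injective h.choose_spec
  refine ⟨(w', z'), ⟨⟨fun j => Finset.sum_nonneg fun i _ => (hwpos i).le, ?_⟩, ?_⟩, ?_⟩
  · -- sum of w' = 1
    rw [show ∑ j, w' j = ∑ j, ∑ i ∈ Finset.univ.filter (fun i => e i = j), w i from rfl]
    rw [Finset.sum_fiberwise]
    exact hwsum
  · intro j _
    simp only [hz']
    by_cases h : ∃ i, e i = j
    · simp only [dif_pos h]
      exact hzK ⟨h.choose, rfl⟩
    · simp only [dif_neg h]
      exact hk₀
  · -- the sum equals x
    show ∑ j, w' j • z' j = x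
    have key : ∀ j, w' j • z' j = ∑ i ∈ Finset.univ.filter (fun i => e i = j), w i • z i := by
      intro j
      by_cases h : ∃ i, e i = j
      · obtain ⟨i, rfl⟩ := h
        simp only [hw']
        simp only [hfib i, Finset.sum_singleton, hz'e i]
      · have hempty : Finset.univ.filter (fun i => e i = j) = ∅ := by
          ext i; simp only [Finset.mem_filter, Finset.mem_univ, true_and, Finset.notMem_empty,
            iff_false]
          exact fun hc => h ⟨i, hc⟩
        simp only [hw', hempty]
        simp
    rw [Finset.sum_congr rfl fun j _ => key j, Finset.sum_fiberwise]
    exact hsum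


section SepLemmas

variable {α β : Type*} [Fintype α] [Fintype β]

lemma auxKronCT (A : Matrix α α ℂ) (B : Matrix β β ℂ) : (A ⊗ₖ B)ᴴ = Aᴴ ⊗ₖ Bᴴ := by
  ext ⟨ia, ib⟩ ⟨ja, jb⟩
  simp [Matrix.conjTranspose_apply, Matrix.kroneckerMap_apply, mul_comm]

lemma sepZero : (0 : Matrix (α × β) (α × β) ℂ) ∈ SepCone α β :=
  ⟨Fin 0, inferInstance, fun i => i.elim0, fun i => i.elim0, fun i => i.elim0,
    fun i => i.elim0, by simp⟩

lemma sepAdd {a b : Matrix (α × β) (α × β) ℂ} (ha : a ∈ SepCone α β) (hb : b ∈ SepCone α β) :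
    a + b ∈ SepCone α β := by
  obtain ⟨ι₁, _, P₁, Q₁, hP₁, hQ₁, rfl⟩ := ha
  obtain ⟨ι₂, _, P₂, Q₂, hP₂, hQ₂, rfl⟩ := hb
  refine ⟨ι₁ ⊕ ι₂, inferInstance, Sum.elim P₁ P₂, Sum.elim Q₁ Q₂, ?_, ?_, ?_⟩
  · rintro (i | i) <;> [exact hP₁ i; exact hP₂ i]
  · rintro (i | i) <;> [exact hQ₁ i; exact hQ₂ i]
  · rw [Fintype.sum_sum_type]; rfl

lemma sepSmul {σ : Matrix (α × β) (α × β) ℂ} {r : ℝ} (hr : 0 ≤ r) (hσ : σ ∈ SepCone α β) :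
    r • σ ∈ SepCone α β := by
  obtain ⟨ι, _, P, Q, hP, hQ, rfl⟩ := hσ
  refine ⟨ι, inferInstance, fun i => ((r : ℂ)) • P i, Q, fun i => auxPsdSmul (hP i) hr, hQ, ?_⟩
  rw [Finset.smul_sum]
  refine Finset.sum_congr rfl fun i _ => ?_
  rw [Matrix.smul_kronecker]
  ext ij kl
  simp [Complex.real_smul]

lemma sepHerm {σ : Matrix (α × β) (α × β) ℂ} (hσ : σ ∈ SepCone α β) : σ.IsHermitian := by
  obtain ⟨ι, _, P, Q, hP, hQ, rfl⟩ := hσ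
  show _ = _
  rw [Matrix.conjTranspose_sum]
  exact Finset.sum_congr rfl fun i _ => by rw [auxKronCT, (hP i).1, (hQ i).1]

end SepLemmas

section AuxDefs

variable (α β : Type*) [Fintype α] [Fintype β]

/-- Kronecker products of trace-one PSD pairs. -/
def auxK : Set (Matrix (α × β) (α × β) ℂ) :=
  (fun pq : Matrix α α ℂ × Matrix β β ℂ => pq.1 ⊗ₖ pq.2) ''
    ({P : Matrix α α ℂ | P.PosSemidef ∧ P.trace = 1} ×ˢ
     {Q : Matrix β β ℂ | Q.PosSemidef ∧ Q.trace = 1})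

/-- Convex combinations of at most `finrank + 1` elements of `auxK`. -/
def auxH : Set (Matrix (α × β) (α × β) ℂ) :=
  (fun wz : (Fin (Module.finrank ℝ (Matrix (α × β) (α × β) ℂ) + 1) → ℝ) ×
      (Fin (Module.finrank ℝ (Matrix (α × β) (α × β) ℂ) + 1) → Matrix (α × β) (α × β) ℂ) =>
    ∑ i, wz.1 i • wz.2 i) ''
    ((stdSimplex ℝ (Fin (Module.finrank ℝ (Matrix (α × β) (α × β) ℂ) + 1))) ×ˢ
      (Set.univ.pi fun _ => auxK α β))

/-- The cone over `auxH`. -/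
def auxC : Set (Matrix (α × β) (α × β) ℂ) :=
  {x | ∃ r : ℝ, 0 ≤ r ∧ ∃ c ∈ auxH α β, x = r • c}

/-- Real part of the trace, as a real-linear map. -/
noncomputable def auxL : Matrix (α × β) (α × β) ℂ →ₗ[ℝ] ℝ :=
  Complex.reLm.comp ((Matrix.traceLinearMap (α × β) ℂ ℂ).restrictScalars ℝ)

end AuxDefs

section AuxLemmas

variable {α β : Type*} [Fintype α] [Fintype β]

lemma auxL_apply (x : Matrix (α × β) (α × β) ℂ) : auxL α β x = x.trace.re := rfl

lemma sepKron {P : Matrix α α ℂ} {Q : Matrix β β ℂ} (hP : P.PosSemidef) (hQ : Q.PosSemidef) :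
    P ⊗ₖ Q ∈ SepCone α β :=
  ⟨Unit, inferInstance, fun _ => P, fun _ => Q, fun _ => hP, fun _ => hQ, by simp⟩

lemma auxKcomp : IsCompact (auxK α β) := by
  have hkron : Continuous (fun pq : Matrix α α ℂ × Matrix β β ℂ => pq.1 ⊗ₖ pq.2) := by
    apply continuous_matrix
    rintro ⟨ia, ib⟩ ⟨ja, jb⟩
    exact (continuous_fst.matrix_elem ia ja).mul (continuous_snd.matrix_elem ib jb)
  exact ((auxSCompact).prod (auxSCompact)).image hkron

lemma auxLK {x : Matrix (α × β) (α × β) ℂ} (hx : x ∈ auxK α β) : (auxL α β) x = 1 := by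
  obtain ⟨⟨P, Q⟩, ⟨⟨hP, hPt⟩, ⟨hQ, hQt⟩⟩, rfl⟩ := hx
  rw [auxL_apply, Matrix.trace_kronecker, hPt, hQt]
  simp

lemma auxExistsS (γ : Type*) [Fintype γ] [Nonempty γ] : ∃ P : Matrix γ γ ℂ,
    P.PosSemidef ∧ P.trace = 1 := by
  classical
  refine ⟨(((Fintype.card γ : ℝ)⁻¹ : ℝ) : ℂ) • 1, auxPsdSmul Matrix.PosSemidef.one (by positivity), ?_⟩
  rw [Matrix.trace_smul, Matrix.trace_one, smul_eq_mul]
  have hcard : (Fintype.card γ : ℝ) ≠ 0 := by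
    simp [Fintype.card_ne_zero]
  push_cast
  field_simp

lemma auxKne [Nonempty α] [Nonempty β] : (auxK α β).Nonempty := by
  obtain ⟨P, hP⟩ := auxExistsS α
  obtain ⟨Q, hQ⟩ := auxExistsS β
  exact ⟨P ⊗ₖ Q, ⟨⟨P, Q⟩, ⟨hP, hQ⟩, rfl⟩⟩

lemma auxHcomp : IsCompact (auxH α β) := by
  have hg : Continuous (fun wz : (Fin (Module.finrank ℝ (Matrix (α × β) (α × β) ℂ) + 1) → ℝ) ×
      (Fin (Module.finrank ℝ (Matrix (α × β) (α × β) ℂ) + 1) → Matrix (α × β) (α × β) ℂ) =>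
      ∑ i, wz.1 i • wz.2 i) :=
    continuous_finset_sum _ fun i _ =>
      ((continuous_apply i).comp continuous_fst).smul ((continuous_apply i).comp continuous_snd)
  exact ((isCompact_stdSimplex _ _).prod (isCompact_univ_pi fun _ => auxKcomp)).image hg

lemma auxLH {x : Matrix (α × β) (α × β) ℂ} (hx : x ∈ auxH α β) : (auxL α β) x = 1 := by
  obtain ⟨⟨w, z⟩, ⟨hw, hz⟩, rfl⟩ := hx
  rw [map_sum]
  have : ∀ i, (auxL α β) (w i • z i) = w i := by
    intro i
    rw [_root_.map_smul, auxLK (hz i (Set.mem_univ i)), smul_eq_mul, mul_one]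
  rw [Finset.sum_congr rfl fun i _ => this i]
  exact hw.2

lemma auxHne [Nonempty α] [Nonempty β] : (auxH α β).Nonempty := by
  obtain ⟨k₀, hk₀⟩ := (auxKne : (auxK α β).Nonempty)
  set d := Module.finrank ℝ (Matrix (α × β) (α × β) ℂ) + 1
  refine ⟨∑ _i : Fin d, ((d : ℝ)⁻¹) • k₀, ⟨(fun _ => (d : ℝ)⁻¹, fun _ => k₀), ⟨⟨?_, ?_⟩, ?_⟩, rfl⟩⟩
  · intro i; positivity
  · rw [Finset.sum_const]
    simp only [Finset.card_univ, Fintype.card_fin, nsmul_eq_mul]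
    rw [mul_inv_cancel₀]
    positivity
  · intro i _; exact hk₀

lemma auxCsubSep : auxC α β ⊆ SepCone α β := by
  rintro x ⟨r, hr, c, ⟨⟨w, z⟩, ⟨hw, hz⟩, rfl⟩, rfl⟩
  rw [Finset.smul_sum]
  apply Finset.sum_induction _ (· ∈ SepCone α β) (fun _ _ => sepAdd) sepZero
  intro i _
  obtain ⟨⟨P, Q⟩, ⟨⟨hP, _⟩, ⟨hQ, _⟩⟩, heq⟩ := hz i (Set.mem_univ i)
  rw [smul_smul, ← heq]
  exact sepSmul (mul_nonneg hr (hw.1 i)) (sepKron hP hQ)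

lemma auxSepSubC [Nonempty α] [Nonempty β] : SepCone α β ⊆ auxC α β := by
  classical
  rintro σ ⟨ι, _, P, Q, hP, hQ, rfl⟩
  obtain ⟨k₀, hk₀⟩ := (auxKne : (auxK α β).Nonempty)
  set t : ι → ℝ := fun i => ((P i).trace.re) * ((Q i).trace.re) with ht
  have htnn : ∀ i, 0 ≤ t i := fun i =>
    mul_nonneg (auxTraceRe (hP i)).1 (auxTraceRe (hQ i)).1
  -- for each i, find c i ∈ auxK with P i ⊗ₖ Q i = t i • c i
  have hdecomp : ∀ i, ∃ c ∈ auxK α β, P i ⊗ₖ Q i = t i • c := by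
    intro i
    by_cases hp : (P i).trace.re = 0
    · refine ⟨k₀, hk₀, ?_⟩
      have : P i = 0 := auxTraceZero (hP i) hp
      rw [this, ht]
      simp [Matrix.zero_kronecker, hp]
    by_cases hq : (Q i).trace.re = 0
    · refine ⟨k₀, hk₀, ?_⟩
      have : Q i = 0 := auxTraceZero (hQ i) hq
      rw [this, ht]
      simp [Matrix.kronecker_zero, hq]
    have hppos : 0 < (P i).trace.re := lt_of_le_of_ne (auxTraceRe (hP i)).1 (Ne.symm hp)
    have hqpos : 0 < (Q i).trace.re := lt_of_le_of_ne (auxTraceRe (hQ i)).1 (Ne.symm hq)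
    refine ⟨(((((P i).trace.re)⁻¹ : ℝ) : ℂ) • P i) ⊗ₖ (((((Q i).trace.re)⁻¹ : ℝ) : ℂ) • Q i),
      ⟨⟨_, _⟩, ⟨⟨auxPsdSmul (hP i) (by positivity), ?_⟩,
        ⟨auxPsdSmul (hQ i) (by positivity), ?_⟩⟩, rfl⟩, ?_⟩
    · rw [Matrix.trace_smul, smul_eq_mul, (auxTraceRe (hP i)).2]
      simp only [Complex.ofReal_re]
      rw [← Complex.ofReal_mul, inv_mul_cancel₀ (ne_of_gt hppos), Complex.ofReal_one]
    · rw [Matrix.trace_smul, smul_eq_mul, (auxTraceRe (hQ i)).2]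
      simp only [Complex.ofReal_re]
      rw [← Complex.ofReal_mul, inv_mul_cancel₀ (ne_of_gt hqpos), Complex.ofReal_one]
    · have h1 : (((((P i).trace.re)⁻¹ : ℝ) : ℂ) • P i) ⊗ₖ (((((Q i).trace.re)⁻¹ : ℝ) : ℂ) • Q i)
          = (((((P i).trace.re)⁻¹ * ((Q i).trace.re)⁻¹ : ℝ)) : ℂ) • (P i ⊗ₖ Q i) := by
        rw [Matrix.smul_kronecker, Matrix.kronecker_smul, smul_smul, Complex.ofReal_mul]
      have hsc : t i * (((P i).trace.re)⁻¹ * ((Q i).trace.re)⁻¹) = 1 := by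
        rw [ht]; field_simp
      rw [h1, auxRealSmul, smul_smul, ← Complex.ofReal_mul, hsc, Complex.ofReal_one, one_smul]
  choose c hcK hceq using hdecomp
  set T : ℝ := ∑ i, t i with hT
  have hTnn : 0 ≤ T := Finset.sum_nonneg fun i _ => htnn i
  rcases eq_or_lt_of_le hTnn with hT0 | hTpos
  · -- all t i = 0, σ = 0
    obtain ⟨c₀, hc₀⟩ := (auxHne : (auxH α β).Nonempty)
    refine ⟨0, le_refl 0, c₀, hc₀, ?_⟩
    have hti : ∀ i ∈ Finset.univ, t i = 0 := by
      intro i _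
      have := (Finset.sum_eq_zero_iff_of_nonneg (fun i _ => htnn i)).mp hT0.symm
      exact this i (Finset.mem_univ i)
    rw [zero_smul]
    refine Finset.sum_eq_zero fun i _ => ?_
    rw [hceq i, hti i (Finset.mem_univ i), zero_smul]
  · -- T > 0
    have hTne : T ≠ 0 := ne_of_gt hTpos
    have hmem : (∑ i, (t i / T) • c i) ∈ convexHull ℝ (auxK α β) := by
      refine (convex_convexHull ℝ (auxK α β)).sum_mem
        (fun i _ => div_nonneg (htnn i) hTnn) ?_ (fun i _ => subset_convexHull ℝ _ (hcK i))
      rw [← Finset.sum_div]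
      field_simp
      exact hT.symm
    have hmemH : (∑ i, (t i / T) • c i) ∈ auxH α β := auxHull ⟨k₀, hk₀⟩ hmem
    refine ⟨T, hTnn, _, hmemH, ?_⟩
    rw [Finset.smul_sum]
    refine Finset.sum_congr rfl fun i _ => ?_
    rw [hceq i, smul_smul]
    congr 1
    field_simp

end AuxLemmas

section Closed

variable {α β : Type*} [Fintype α] [Fintype β]

lemma auxCclosed [Nonempty α] [Nonempty β] : IsClosed (auxC α β) := by
  haveI : FirstCountableTopology (Matrix (α × β) (α × β) ℂ) :=
    inferInstanceAs (FirstCountableTopology ((α × β) → (α × β) → ℂ))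
  have hLcont : Continuous (auxL α β) := (auxL α β).continuous_of_finiteDimensional
  refine IsSeqClosed.isClosed ?_
  intro x p hx hlim
  choose r hr c hc hxeq using hx
  have hLr : ∀ n, auxL α β (x n) = r n := by
    intro n
    rw [hxeq n, _root_.map_smul, auxLH (hc n), smul_eq_mul, mul_one]
  have hrt : Filter.Tendsto r Filter.atTop (nhds (auxL α β p)) := by
    have h := (hLcont.tendsto p).comp hlim
    have heq : (⇑(auxL α β) ∘ x) = r := funext fun n => hLr n
    rwa [heq] at h
  obtain ⟨cl, hclH, φ, hφ, hccl⟩ := (auxHcomp).tendsto_subseq hc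
  have h1 : Filter.Tendsto (fun k => r (φ k) • c (φ k)) Filter.atTop
      (nhds (auxL α β p • cl)) := (hrt.comp hφ.tendsto_atTop).smul hccl
  have h2 : Filter.Tendsto (fun k => x (φ k)) Filter.atTop (nhds p) :=
    hlim.comp hφ.tendsto_atTop
  have hfun : (fun k => x (φ k)) = fun k => r (φ k) • c (φ k) := funext fun k => hxeq (φ k)
  have hpeq : p = auxL α β p • cl := tendsto_nhds_unique h2 (hfun ▸ h1)
  exact ⟨auxL α β p, ge_of_tendsto' hrt hr, cl, hclH, hpeq⟩

end Closed

theorem stmt10 {α β : Type*} [Fintype α] [Fintype β] [Nonempty α] [Nonempty β]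
    (ρ : Matrix (α × β) (α × β) ℂ) (hρ : ρ.PosSemidef) (htr : ρ.trace = 1)
    (hent : ρ ∉ SepCone α β) :
    ∃ W : Matrix (α × β) (α × β) ℂ, W.IsHermitian ∧
      (W * ρ).trace.re < 0 ∧ ∀ σ ∈ SepCone α β, 0 ≤ (W * σ).trace.re := by
  classical
  haveI : LocallyConvexSpace ℝ (Matrix (α × β) (α × β) ℂ) :=
    inferInstanceAs (LocallyConvexSpace ℝ ((α × β) → (α × β) → ℂ))
  have hEq : SepCone α β = auxC α β := Set.Subset.antisymm auxSepSubC auxCsubSep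
  have hconv : Convex ℝ (auxC α β) := by
    intro x hx y hy a b ha hb hab
    rw [← hEq] at hx hy ⊢
    exact sepAdd (sepSmul ha hx) (sepSmul hb hy)
  have hnotC : ρ ∉ auxC α β := fun h => hent (by rw [hEq]; exact h)
  obtain ⟨f, u, hfρ, hfC⟩ := geometric_hahn_banach_point_closed hconv auxCclosed hnotC
  have h0C : (0 : Matrix (α × β) (α × β) ℂ) ∈ auxC α β := by rw [← hEq]; exact sepZero
  have hu0 : u < 0 := by simpa using hfC 0 h0C
  have hfnn : ∀ σ ∈ SepCone α β, 0 ≤ f σ := by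
    intro σ hσ
    by_contra hneg
    push_neg at hneg
    have ht : 0 ≤ u / f σ := le_of_lt (div_pos_of_neg_of_neg hu0 hneg)
    have hmem : (u / f σ) • σ ∈ auxC α β := by rw [← hEq]; exact sepSmul ht hσ
    have hcon := hfC _ hmem
    rw [_root_.map_smul, smul_eq_mul, div_mul_cancel₀ _ (ne_of_lt hneg)] at hcon
    exact lt_irrefl u hcon
  obtain ⟨W, hW, hWspec⟩ := auxRepr2 f
  refine ⟨W, hW, ?_, ?_⟩
  · rw [hWspec ρ hρ.1]
    exact lt_trans hfρ hu0
  · intro σ hσ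
    rw [hWspec σ (sepHerm hσ)]
    exact hfnn σ hσ
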